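/- arXiv:1307.8232 — 2 statements merged into one kernel-verified Lean document; each statement's English description precedes it below -/
import Mathlib

section
/- Let U be a set of measurable functions on [0,T] each bounded by 1 in absolute value almost everywhere. Define J₀(u) = μ({t : u(t) ≠ 0}) and J₁(u) = ∫₀ᵀ |u(t)| dt. Suppose the set U₁* of minimizers of J₁ over U is nonempty, and every element of U₁* takes values in {-1,0,1} almost everywhere. Then the set U₀* of minimizers of J₀ over U equals U₁*. -/
open MeasureTheory Set

noncomputable def J0 (T : ℝ) (u : ℝ → ℝ) : ℝ :=
  (volume {t ∈ Icc (0:ℝ) T | u t ≠ 0}).toReal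

noncomputable def J1 (T : ℝ) (u : ℝ → ℝ) : ℝ :=
  ∫ t in Icc (0:ℝ) T, |u t|

lemma J0_eq (T : ℝ) (u : ℝ → ℝ) (hu : Measurable u) :
    J0 T u = ((volume.restrict (Icc (0:ℝ) T)) {t | u t ≠ 0}).toReal := by
  have hm : MeasurableSet {t | u t ≠ 0} := hu (measurableSet_singleton 0).compl
  unfold J0
  rw [Measure.restrict_apply hm]
  have : {t | t ∈ Icc (0:ℝ) T ∧ u t ≠ 0} = {t | u t ≠ 0} ∩ Icc (0:ℝ) T := by
    ext t; simp [and_comm]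
  rw [this]

lemma J0_eq_int (T : ℝ) (u : ℝ → ℝ) (hu : Measurable u) :
    J0 T u = ∫ t in Icc (0:ℝ) T, ({t | u t ≠ 0}).indicator (fun _ => (1:ℝ)) t := by
  have hm : MeasurableSet {t | u t ≠ 0} := hu (measurableSet_singleton 0).compl
  rw [J0_eq T u hu, ← Measure.real_def, ← integral_indicator_one hm]
  rfl

lemma indicator_integrable (T : ℝ) (u : ℝ → ℝ) (hu : Measurable u) :
    Integrable (({t | u t ≠ 0}).indicator (fun _ => (1:ℝ)))
      (volume.restrict (Icc (0:ℝ) T)) := by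
  have hm : MeasurableSet {t | u t ≠ 0} := hu (measurableSet_singleton 0).compl
  rw [integrable_indicator_iff hm]
  exact (integrableOn_const (ne_of_lt (by
    rw [Measure.restrict_apply hm]
    exact lt_of_le_of_lt (measure_mono (inter_subset_right)) measure_Icc_lt_top)))

lemma abs_integrable (T : ℝ) (u : ℝ → ℝ) (hu : Measurable u)
    (hb : ∀ᵐ t ∂(volume.restrict (Icc (0:ℝ) T)), |u t| ≤ 1) :
    Integrable (fun t => |u t|) (volume.restrict (Icc (0:ℝ) T)) := by
  refine Integrable.mono' (integrable_const 1) (hu.abs.aestronglyMeasurable) ?_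
  filter_upwards [hb] with t ht
  simpa using ht

lemma J1_le_J0 (T : ℝ) (u : ℝ → ℝ) (hu : Measurable u)
    (hb : ∀ᵐ t ∂(volume.restrict (Icc (0:ℝ) T)), |u t| ≤ 1) :
    J1 T u ≤ J0 T u := by
  rw [J0_eq_int T u hu]
  refine integral_mono_ae (abs_integrable T u hu hb) (indicator_integrable T u hu) ?_
  filter_upwards [hb] with t ht
  by_cases h : u t = 0
  · simp [h]
  · simpa [Set.indicator_of_mem, h] using ht

lemma J1_eq_J0 (T : ℝ) (u : ℝ → ℝ) (hu : Measurable u)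
    (hbang : ∀ᵐ t ∂(volume.restrict (Icc (0:ℝ) T)), u t ∈ ({-1, 0, 1} : Set ℝ)) :
    J1 T u = J0 T u := by
  rw [J0_eq_int T u hu]
  refine integral_congr_ae ?_
  filter_upwards [hbang] with t ht
  simp only [mem_insert_iff, mem_singleton_iff] at ht
  rcases ht with h | h | h <;> simp [h, Set.indicator_apply]

theorem hands_off_eq_L1 (T : ℝ) (hT : 0 < T) (U : Set (ℝ → ℝ))
    (hU : ∀ u ∈ U, Measurable u ∧ (∀ᵐ t ∂(volume.restrict (Icc (0:ℝ) T)), |u t| ≤ 1))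
    (hne : {u ∈ U | ∀ v ∈ U, J1 T u ≤ J1 T v}.Nonempty)
    (hbang : ∀ u ∈ {u ∈ U | ∀ v ∈ U, J1 T u ≤ J1 T v},
      ∀ᵐ t ∂(volume.restrict (Icc (0:ℝ) T)), u t ∈ ({-1, 0, 1} : Set ℝ)) :
    {u ∈ U | ∀ v ∈ U, J0 T u ≤ J0 T v} = {u ∈ U | ∀ v ∈ U, J1 T u ≤ J1 T v} := by
  obtain ⟨w, hwU, hwmin⟩ := hne
  have hwJ : J1 T w = J0 T w :=
    J1_eq_J0 T w (hU w hwU).1 (hbang w ⟨hwU, hwmin⟩)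
  ext u
  simp only [Set.mem_setOf_eq]
  constructor
  · rintro ⟨huU, hmin⟩
    refine ⟨huU, fun v hv => ?_⟩
    calc J1 T u ≤ J0 T u := J1_le_J0 T u (hU u huU).1 (hU u huU).2
      _ ≤ J0 T w := hmin w hwU
      _ = J1 T w := hwJ.symm
      _ ≤ J1 T v := hwmin v hv
  · rintro ⟨huU, hmin⟩
    have huJ : J1 T u = J0 T u :=
      J1_eq_J0 T u (hU u huU).1 (hbang u ⟨huU, hmin⟩)
    refine ⟨huU, fun v hv => ?_⟩
    calc J0 T u = J1 T u := huJ.symm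
      _ ≤ J1 T v := hmin v hv
      _ ≤ J0 T v := J1_le_J0 T v (hU v hv).1 (hU v hv).2
end

section
/- Pointwise limit of the saturated shrinkage to the dead-zone function: for any fixed λ > 0 and any w ∈ ℝ with w ≠ λ and w ≠ -λ, lim_{r→0⁺} sat(S_{λ/r}(w/r)) = dez_λ(w). -/
open Set Filter

noncomputable def shrink (c v : ℝ) : ℝ :=
  if v < -c then v + c else if c < v then v - c else 0

noncomputable def sat (v : ℝ) : ℝ := max (-1) (min 1 v)

noncomputable def dez (lam w : ℝ) : ℝ :=
  if w < -lam then -1 else if lam < w then 1 else 0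

theorem sat_shrink_tendsto_dez (lam w : ℝ) (hlam : 0 < lam)
    (hw1 : w ≠ lam) (hw2 : w ≠ -lam) :
    Tendsto (fun r : ℝ => sat (shrink (lam / r) (w / r)))
      (nhdsWithin 0 (Ioi 0)) (nhds (dez lam w)) := by
  rcases lt_trichotomy w (-lam) with h | h | h
  · have hd : dez lam w = -1 := by rw [dez, if_pos h]
    rw [hd]
    apply Tendsto.congr' _ tendsto_const_nhds
    filter_upwards [Ioo_mem_nhdsGT_of_mem (show (0:ℝ) ∈ Ico 0 (-lam - w) by
      constructor <;> [rfl; linarith])] with r hr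
    have hr0 : 0 < r := hr.1
    have h1 : w / r < -(lam / r) := by
      rw [← neg_div, div_lt_div_iff_of_pos_right hr0]; linarith
    have h2 : w / r + lam / r ≤ -1 := by
      rw [← add_div, div_le_iff₀ hr0]; nlinarith [hr.2]
    simp only [shrink, sat, if_pos h1]
    rw [min_eq_right (by linarith), max_eq_left (by linarith)]
  · exact absurd h hw2
  · rcases lt_trichotomy w lam with h2 | h2 | h2
    · have hd : dez lam w = 0 := by
        rw [dez, if_neg (by linarith), if_neg (by linarith)]
      rw [hd]
      apply Tendsto.congr' _ tendsto_const_nhds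
      filter_upwards [self_mem_nhdsWithin] with r hr0
      have hr0 : (0:ℝ) < r := hr0
      have ha : ¬ (w / r < -(lam / r)) := by
        rw [← neg_div, div_lt_div_iff_of_pos_right hr0]; linarith
      have hb : ¬ (lam / r < w / r) := by
        rw [div_lt_div_iff_of_pos_right hr0]; linarith
      simp only [shrink, sat, if_neg ha, if_neg hb]
      rw [min_eq_right (by norm_num), max_eq_right (by norm_num)]
    · exact absurd h2 hw1
    · have hd : dez lam w = 1 := by
        rw [dez, if_neg (by linarith), if_pos h2]
      rw [hd]
      apply Tendsto.congr' _ tendsto_const_nhds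
      filter_upwards [Ioo_mem_nhdsGT_of_mem (show (0:ℝ) ∈ Ico 0 (w - lam) by
        constructor <;> [rfl; linarith])] with r hr
      have hr0 : 0 < r := hr.1
      have ha : ¬ (w / r < -(lam / r)) := by
        rw [← neg_div, div_lt_div_iff_of_pos_right hr0]; linarith
      have hb : lam / r < w / r := by
        rw [div_lt_div_iff_of_pos_right hr0]; linarith
      have hc : 1 ≤ w / r - lam / r := by
        rw [div_sub_div_same, le_div_iff₀ hr0]; nlinarith [hr.2]
      simp only [shrink, sat, if_neg ha, if_pos hb]
      rw [min_eq_left hc, max_eq_right (by norm_num)]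
end
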